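/- The loops δ₁, δ₂ : 𝕊¹ → ℂ \ {−1,1} given by δ₁(θ) = 1 + e^{iθ} and δ₂(θ) = −1 + e^{iθ} are NOT freely homotopic in ℂ \ {−1,1}, i.e., they are not homotopic as continuous maps from the circle 𝕊¹ to ℂ \ {−1,1}. -/

import Mathlib

open Complex Real Finset

private lemma exp_arg_mul_I' {z : ℂ} (hz : z ≠ 0) :
    Complex.exp (z.arg * I) = z / ‖z‖ := by
  have h := Complex.norm_mul_exp_arg_mul_I z
  have habs : (‖z‖ : ℂ) ≠ 0 := by
    simpa using (norm_ne_zero_iff.2 hz)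
  rw [eq_div_iff habs, mul_comm]
  exact h

private lemma exists_int_of_exp_eq_one {x : ℝ} (h : Complex.exp ((x : ℂ) * I) = 1) :
    ∃ k : ℤ, x = k * (2 * π) := by
  rw [Complex.exp_eq_one_iff] at h
  obtain ⟨k, hk⟩ := h
  refine ⟨k, ?_⟩
  have h0 : ((x - k * (2 * π) : ℝ) : ℂ) * I = 0 := by
    push_cast
    linear_combination hk
  rcases mul_eq_zero.1 h0 with h1 | h1
  · have : (x - k * (2 * π) : ℝ) = 0 := by exact_mod_cast h1
    linarith
  · exact absurd h1 Complex.I_ne_zero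

private lemma arg_eq_of_exp_eq' {z : ℂ} {x : ℝ} (hz : z ≠ 0) (h1 : -π < x) (h2 : x ≤ π)
    (h : Complex.exp ((x : ℂ) * I) = z / ‖z‖) : z.arg = x := by
  have hx : Complex.exp ((x : ℂ) * I) = Complex.exp ((z.arg : ℂ) * I) := by
    rw [h, exp_arg_mul_I' hz]
  rw [Complex.exp_eq_exp_iff_exists_int] at hx
  obtain ⟨k, hk⟩ := hx
  have h0 : ((x - z.arg - k * (2 * π) : ℝ) : ℂ) * I = 0 := by
    push_cast
    linear_combination hk
  have h0' : (x - z.arg - k * (2 * π) : ℝ) = 0 := by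
    rcases mul_eq_zero.1 h0 with h1' | h1'
    · exact_mod_cast h1'
    · exact absurd h1' Complex.I_ne_zero
  have hπ := Real.pi_pos
  have ha1 := Complex.neg_pi_lt_arg z
  have ha2 := Complex.arg_le_pi z
  have hk1 : (-1 : ℝ) < (k : ℝ) := by nlinarith
  have hk2 : ((k : ℝ)) < 1 := by nlinarith
  have hk0 : k = 0 := by
    have l1 : (-1 : ℤ) < k := by exact_mod_cast hk1
    have l2 : k < (1 : ℤ) := by exact_mod_cast hk2
    omega
  rw [hk0] at h0'
  push_cast at h0'
  linarith

private lemma arg_div_of_re_pos {u v : ℂ} (hu : 0 < u.re) (hv : 0 < v.re) :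
    (u / v).arg = u.arg - v.arg := by
  have hu0 : u ≠ 0 := fun h => by simp [h] at hu
  have hv0 : v ≠ 0 := fun h => by simp [h] at hv
  have hπ := Real.pi_pos
  have hu1 : -(π / 2) < u.arg := Complex.neg_pi_div_two_lt_arg_iff.2 (Or.inl hu)
  have hu2 : u.arg ≤ π / 2 := Complex.arg_le_pi_div_two_iff.2 (Or.inl hu.le)
  have hv1 : -(π / 2) < v.arg := Complex.neg_pi_div_two_lt_arg_iff.2 (Or.inl hv)
  have hv2 : v.arg ≤ π / 2 := Complex.arg_le_pi_div_two_iff.2 (Or.inl hv.le)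
  have hq0 : u / v ≠ 0 := div_ne_zero hu0 hv0
  refine arg_eq_of_exp_eq' hq0 (by linarith) (by linarith) ?_
  have habsu : (‖u‖ : ℂ) ≠ 0 := by simpa using (norm_ne_zero_iff.2 hu0)
  have habsv : (‖v‖ : ℂ) ≠ 0 := by simpa using (norm_ne_zero_iff.2 hv0)
  have : Complex.exp (((u.arg - v.arg : ℝ) : ℂ) * I)
      = Complex.exp (u.arg * I) / Complex.exp (v.arg * I) := by
    rw [← Complex.exp_sub]
    push_cast
    ring_nf
  rw [this, exp_arg_mul_I' hu0, exp_arg_mul_I' hv0, norm_div]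
  push_cast
  field_simp

/-- The loops `δ₁(θ) = 1 + e^{iθ}` and `δ₂(θ) = −1 + e^{iθ}` are NOT
freely homotopic in `ℂ \ {−1, 1}`: there is no homotopy between them avoiding both
`−1` and `1`. -/
theorem stmt_17 (δ₁ δ₂ : C(Circle, ℂ))
    (hδ₁ : ∀ w : Circle, δ₁ w = 1 + (w : ℂ))
    (hδ₂ : ∀ w : Circle, δ₂ w = -1 + (w : ℂ)) :
    ¬ ∃ H : ContinuousMap.Homotopy δ₁ δ₂,
        ∀ p : unitInterval × Circle, H p ≠ -1 ∧ H p ≠ 1 := by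
  rintro ⟨H, hH⟩
  have hπ := Real.pi_pos
  -- the map `G p = H p - 1` avoids `0`
  set G : unitInterval × Circle → ℂ := fun p => H p - 1 with hGdef
  have hGcont : Continuous G := H.continuous.sub continuous_const
  have hG0 : ∀ p, G p ≠ 0 := fun p => sub_ne_zero.2 (hH p).2
  -- positive lower bound for ‖G‖
  obtain ⟨p₀, -, hp₀⟩ := isCompact_univ.exists_isMinOn ⟨(0, 1), trivial⟩
    hGcont.norm.continuousOn
  set m : ℝ := ‖G p₀‖ with hm_def
  have hm : 0 < m := norm_pos_iff.2 (hG0 p₀)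
  have hm_le : ∀ p, m ≤ ‖G p‖ := fun p => hp₀ trivial
  -- uniform continuity
  have hUC : UniformContinuous G := CompactSpace.uniformContinuous_of_continuous hGcont
  obtain ⟨δ, hδpos, hδ'⟩ := Metric.uniformContinuous_iff.mp hUC m hm
  -- choose a fine subdivision
  obtain ⟨n, hn⟩ := exists_nat_gt (max (4 * π) (4 * π / δ))
  have hn1 : 4 * π < (n : ℝ) := lt_of_le_of_lt (le_max_left _ _) hn
  have hn2 : 4 * π / δ < (n : ℝ) := lt_of_le_of_lt (le_max_right _ _) hn
  have hn0 : (0 : ℝ) < n := by linarith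
  have hnne : (n : ℝ) ≠ 0 := ne_of_gt hn0
  -- subdivision points
  set w : ℕ → Circle := fun k => Circle.exp (2 * π * k / n) with hw_def
  have hw_succ : ∀ k : ℕ, w (k + 1) = w k * Circle.exp (2 * π / n) := by
    intro k
    rw [hw_def]
    simp only
    rw [← Circle.exp_add]
    congr 1
    push_cast
    field_simp
  have hw0 : w 0 = 1 := by simp [hw_def, Circle.exp_zero]
  have hwn : w n = 1 := by
    have : (2 * π * (n : ℝ) / n) = 2 * π := by field_simp
    simp [hw_def, this, Circle.exp_two_pi]
  -- adjacent points are close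
  have hdist : ∀ k : ℕ, dist (w (k + 1)) (w k) < δ := by
    intro k
    have : dist (w (k + 1)) (w k) = ‖(w (k + 1) : ℂ) - (w k : ℂ)‖ := by
      rw [← Complex.dist_eq]
      rfl
    rw [this, hw_succ k]
    have hcoe : ((w k * Circle.exp (2 * π / n) : Circle) : ℂ)
        = (w k : ℂ) * Complex.exp (((2 * π / n : ℝ) : ℂ) * I) := by
      push_cast [Circle.coe_exp]
      rfl
    rw [hcoe]
    have : (w k : ℂ) * Complex.exp (((2 * π / n : ℝ) : ℂ) * I) - (w k : ℂ)
        = (w k : ℂ) * (Complex.exp (((2 * π / n : ℝ) : ℂ) * I) - 1) := by ring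
    rw [this, norm_mul, Circle.norm_coe, one_mul]
    have habsx : ‖((2 * π / n : ℝ) : ℂ) * I‖ = 2 * π / n := by
      rw [norm_mul, Complex.norm_I, mul_one, Complex.norm_real, Real.norm_eq_abs, abs_of_pos (by positivity)]
    have hle1 : ‖((2 * π / n : ℝ) : ℂ) * I‖ ≤ 1 := by
      rw [habsx]
      rw [div_le_one hn0]
      linarith
    have := Complex.norm_exp_sub_one_le hle1
    rw [habsx] at this
    have hfin : 2 * (2 * π / (n:ℝ)) < δ := by
      rw [div_lt_iff₀ hδpos] at hn2
      rw [show (2:ℝ) * (2 * π / (n:ℝ)) = 4 * π / n by ring, div_lt_iff₀ hn0]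
      nlinarith
    linarith
  -- the adjacent values of G differ by less than m
  have hadj : ∀ (t : unitInterval) (k : ℕ), ‖G (t, w (k + 1)) - G (t, w k)‖ < m := by
    intro t k
    rw [← dist_eq_norm]
    apply hδ'
    rw [Prod.dist_eq]
    simp only [dist_self]
    exact max_lt hδpos (hdist k)
  -- the successive ratios have positive real part
  have hq_re : ∀ (t : unitInterval) (k : ℕ), 0 < (G (t, w (k + 1)) / G (t, w k)).re := by
    intro t k
    have hb := hG0 (t, w k)
    have hbn : (0 : ℝ) < ‖G (t, w k)‖ := norm_pos_iff.2 hb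
    have h1 : ‖G (t, w (k + 1)) / G (t, w k) - 1‖ < 1 := by
      have : G (t, w (k + 1)) / G (t, w k) - 1
          = (G (t, w (k + 1)) - G (t, w k)) / G (t, w k) := by
        field_simp
      rw [this, norm_div, div_lt_one hbn]
      exact lt_of_lt_of_le (hadj t k) (hm_le _)
    set q := G (t, w (k + 1)) / G (t, w k) with hq
    have h2 : |(q - 1).re| ≤ ‖q - 1‖ := by
      simpa using Complex.abs_re_le_norm (q - 1)
    have h3 : (q - 1).re = q.re - 1 := by simp [Complex.sub_re]
    rw [h3] at h2
    have := abs_le.1 h2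
    linarith [this.1]
  -- the total argument variation
  set S : unitInterval → ℝ :=
    fun t => ∑ k ∈ Finset.range n, (G (t, w (k + 1)) / G (t, w k)).arg with hS_def
  -- continuity of S
  have hScont : Continuous S := by
    apply continuous_finset_sum
    intro k _
    rw [continuous_iff_continuousAt]
    intro t
    have hqc : ContinuousAt (fun t : unitInterval => G (t, w (k + 1)) / G (t, w k)) t := by
      apply ContinuousAt.div
      · exact (hGcont.comp (continuous_id.prodMk continuous_const)).continuousAt
      · exact (hGcont.comp (continuous_id.prodMk continuous_const)).continuousAt
      · exact hG0 _
    show ContinuousAt (Complex.arg ∘ fun t : unitInterval => G (t, w (k + 1)) / G (t, w k)) t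
    exact ContinuousAt.comp (x := t)
      (Complex.continuousAt_arg (Complex.mem_slitPlane_iff.2 (Or.inl (hq_re t k)))) hqc
  -- telescoping product
  have tel : ∀ (t : unitInterval) (N : ℕ),
      (∏ k ∈ Finset.range N, G (t, w (k + 1)) / G (t, w k)) = G (t, w N) / G (t, w 0) := by
    intro t N
    induction N with
    | zero => simp [div_self (hG0 _)]
    | succ N ih =>
      rw [Finset.prod_range_succ, ih]
      field_simp [hG0 (t, w N), hG0 (t, w 0), hG0 (t, w (N + 1))]
  -- S t is an integer multiple of 2π
  have hSint : ∀ t, ∃ k : ℤ, S t = k * (2 * π) := by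
    intro t
    apply exists_int_of_exp_eq_one
    have : ((S t : ℝ) : ℂ) * I = ∑ k ∈ Finset.range n,
        ((G (t, w (k + 1)) / G (t, w k)).arg : ℂ) * I := by
      rw [hS_def]
      push_cast
      rw [Finset.sum_mul]
    rw [this, Complex.exp_sum]
    have hterm : ∀ k ∈ Finset.range n,
        Complex.exp (((G (t, w (k + 1)) / G (t, w k)).arg : ℂ) * I)
        = (G (t, w (k + 1)) / G (t, w k)) / ‖G (t, w (k + 1)) / G (t, w k)‖ := by
      intro k _
      exact exp_arg_mul_I' (div_ne_zero (hG0 _) (hG0 _))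
    rw [Finset.prod_congr rfl hterm, Finset.prod_div_distrib]
    have hnum : (∏ k ∈ Finset.range n, G (t, w (k + 1)) / G (t, w k)) = 1 := by
      rw [tel t n, hwn, hw0, div_self (hG0 _)]
    have hden : (∏ k ∈ Finset.range n,
        ((‖G (t, w (k + 1)) / G (t, w k)‖ : ℝ) : ℂ)) = 1 := by
      rw [← Complex.ofReal_prod, ← norm_prod, hnum]
      simp
    rw [hnum, hden, div_one]
  -- value at 0 : winding number 1
  have hG_at0 : ∀ ww : Circle, G (0, ww) = (ww : ℂ) := by
    intro ww
    rw [hGdef]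
    simp only
    rw [H.apply_zero, hδ₁]
    ring
  have hS0 : S 0 = 2 * π := by
    rw [hS_def]
    simp only
    have hterm : ∀ k ∈ Finset.range n,
        (G ((0 : unitInterval), w (k + 1)) / G ((0 : unitInterval), w k)).arg = 2 * π / n := by
      intro k _
      rw [hG_at0, hG_at0]
      have : (w (k + 1) : ℂ) / (w k : ℂ) = ((Circle.exp (2 * π / n) : Circle) : ℂ) := by
        rw [hw_succ k]
        push_cast
        rw [mul_comm, mul_div_assoc, div_self, mul_one]
        exact Circle.coe_ne_zero _
      rw [this]
      have h2n : (2:ℝ) < n := by nlinarith [Real.pi_gt_three]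
      have hmul : 0 < π * ((n:ℝ) - 2) := mul_pos hπ (by linarith)
      apply Circle.arg_exp
      · have : 0 < 2 * π / (n:ℝ) := by positivity
        linarith
      · rw [div_le_iff₀ hn0]
        nlinarith
    rw [Finset.sum_congr rfl hterm, Finset.sum_const, Finset.card_range, nsmul_eq_mul]
    field_simp
  -- value at 1 : winding number 0
  have hG_at1 : ∀ ww : Circle, G (1, ww) = (ww : ℂ) - 2 := by
    intro ww
    rw [hGdef]
    simp only
    rw [H.apply_one, hδ₂]
    ring
  have hre2 : ∀ ww : Circle, 0 < (2 - (ww : ℂ)).re := by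
    intro ww
    have h1 : (ww : ℂ).re ≤ 1 := by
      have := Complex.re_le_norm (ww : ℂ)
      rwa [Circle.norm_coe] at this
    simp [Complex.sub_re]
    linarith
  have hS1 : S 1 = 0 := by
    rw [hS_def]
    simp only
    have hterm : ∀ k ∈ Finset.range n,
        (G ((1 : unitInterval), w (k + 1)) / G ((1 : unitInterval), w k)).arg
        = (2 - (w (k + 1) : ℂ)).arg - (2 - (w k : ℂ)).arg := by
      intro k _
      rw [hG_at1, hG_at1]
      have : ((w (k + 1) : ℂ) - 2) / ((w k : ℂ) - 2)
          = (2 - (w (k + 1) : ℂ)) / (2 - (w k : ℂ)) := by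
        rw [show ((w (k + 1) : ℂ) - 2) = -(2 - (w (k + 1) : ℂ)) by ring,
          show ((w k : ℂ) - 2) = -(2 - (w k : ℂ)) by ring, neg_div_neg_eq]
      rw [this]
      exact arg_div_of_re_pos (hre2 _) (hre2 _)
    rw [Finset.sum_congr rfl hterm]
    have := Finset.sum_range_sub (fun k => (2 - (w k : ℂ)).arg) n
    rw [this, hwn, hw0, sub_self]
  -- intermediate value theorem : some t has S t = π
  have hIVT : π ∈ Set.range S := by
    apply intermediate_value_univ (1 : unitInterval) (0 : unitInterval) hScont
    rw [hS1, hS0]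
    constructor <;> linarith
  obtain ⟨t, ht⟩ := hIVT
  obtain ⟨k, hk⟩ := hSint t
  rw [ht] at hk
  have h1 : (1 : ℝ) = 2 * k := by
    have : π * 1 = π * (2 * k) := by linarith [hk]
    exact mul_left_cancel₀ (ne_of_gt hπ) this
  have h2 : (1 : ℤ) = 2 * k := by exact_mod_cast h1
  omega
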